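/- Let M be the number of ways to write a multiset P = {Q_1,…,Q_q, R_1,…,R_r} of q + r distinct nonempty sets into an ordered tuple of blocks, where each block is either a single Q, a single R, or a union Q_u ∪ R_v of one Q with one R, and each Q and R is used exactly once. Then ∑_{s=0}^{min(q,r)} ((-1)^{q+r-s}/(q+r-s)) · (number of such tuples with exactly s merged pairs) = 0 when q, r ≥ 1; explicitly, the number of tuples with s merged pairs is C(q,s)·C(r,s)·s!·(q+r−s)!. -/

import Mathlib

def S (k q n : ℕ) : ℚ :=
  ∑ s ∈ Finset.range (q+1), (-1:ℚ)^s * (q.choose s) * ((n - s).choose k)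

lemma hS (k q m : ℕ) : S k q m
    = (m.choose k : ℚ) - ∑ s ∈ Finset.range q, (-1:ℚ)^s * (q.choose (s+1)) * ((m - 1 - s).choose k) := by
  rw [S, Finset.sum_range_succ']
  have : ∀ s ∈ Finset.range q, (-1:ℚ)^(s+1) * (q.choose (s+1)) * ((m - (s+1)).choose k)
      = -((-1:ℚ)^s * (q.choose (s+1)) * ((m - 1 - s).choose k)) := by
    intro s _
    have h : m - (s+1) = m - 1 - s := by omega
    rw [h, pow_succ]
    ring
  rw [Finset.sum_congr rfl this]
  simp
  ring

lemma S_succ (k q n : ℕ) : S k (q+1) n = S k q n - S k q (n-1) := by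
  have key : ∑ s ∈ Finset.range (q+1), (-1:ℚ)^s * (q.choose (s+1)) * ((n - 1 - s).choose k)
      = ∑ s ∈ Finset.range q, (-1:ℚ)^s * (q.choose (s+1)) * ((n - 1 - s).choose k) := by
    rw [Finset.sum_range_succ, Nat.choose_succ_self]
    simp
  rw [S, Finset.sum_range_succ']
  have step : ∀ s ∈ Finset.range (q+1), (-1:ℚ)^(s+1) * ((q+1).choose (s+1)) * ((n - (s+1)).choose k)
      = -((-1:ℚ)^s * (q.choose s) * ((n - 1 - s).choose k))
        + -((-1:ℚ)^s * (q.choose (s+1)) * ((n - 1 - s).choose k)) := by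
    intro s _
    have h : n - (s+1) = n - 1 - s := by omega
    rw [h, Nat.choose_succ_succ, pow_succ]
    push_cast
    ring
  rw [Finset.sum_congr rfl step, Finset.sum_add_distrib, Finset.sum_neg_distrib, Finset.sum_neg_distrib, key]
  rw [hS k q n]
  rw [S]
  simp
  ring


def SzegoMatching (q r s : ℕ) : Type :=
  { M : Finset (Fin q × Fin r) // M.card = s ∧
      ∀ p ∈ M, ∀ p' ∈ M, (p.1 = p'.1 ∨ p.2 = p'.2) → p = p' }

def SzegoBlocks {q r s : ℕ} (M : SzegoMatching q r s) : Type :=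
  { u : Fin q // ∀ v, (u, v) ∉ M.1 } ⊕ { v : Fin r // ∀ u, (u, v) ∉ M.1 } ⊕
    { p : Fin q × Fin r // p ∈ M.1 }

def SzegoConfig (q r s : ℕ) : Type :=
  Σ M : SzegoMatching q r s, Fin (q + r - s) ≃ SzegoBlocks M

instance (q r s : ℕ) : Fintype (SzegoMatching q r s) := by
  unfold SzegoMatching; infer_instance

instance {q r s : ℕ} (M : SzegoMatching q r s) : Fintype (SzegoBlocks M) := by
  unfold SzegoBlocks; infer_instance

instance {q r s : ℕ} (M : SzegoMatching q r s) : DecidableEq (SzegoBlocks M) := by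
  unfold SzegoBlocks; exact instDecidableEqSum

instance (q r s : ℕ) : Fintype (SzegoConfig q r s) := by
  unfold SzegoConfig; infer_instance

lemma card_fst_image {q r s : ℕ} (M : SzegoMatching q r s) :
    (M.1.image Prod.fst).card = s := by
  rw [Finset.card_image_of_injOn, M.2.1]
  intro p hp p' hp' h
  exact M.2.2 p hp p' hp' (Or.inl h)

lemma card_snd_image {q r s : ℕ} (M : SzegoMatching q r s) :
    (M.1.image Prod.snd).card = s := by
  rw [Finset.card_image_of_injOn, M.2.1]
  intro p hp p' hp' h
  exact M.2.2 p hp p' hp' (Or.inr h)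

lemma card_blocks {q r s : ℕ} (hq : s ≤ q) (hr : s ≤ r) (M : SzegoMatching q r s) :
    Fintype.card (SzegoBlocks M) = q + r - s := by
  have h1 : Fintype.card { u : Fin q // ∀ v, (u, v) ∉ M.1 } = q - s := by
    rw [Fintype.card_subtype]
    have : Finset.univ.filter (fun u : Fin q => ∀ v, (u, v) ∉ M.1)
        = (M.1.image Prod.fst)ᶜ := by
      ext u
      simp only [Finset.mem_filter, Finset.mem_univ, true_and, Finset.mem_compl,
        Finset.mem_image, not_exists, not_and]
      constructor
      · rintro h ⟨a, b⟩ hp hpu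
        exact h b (hpu ▸ hp)
      · intro h v hv
        exact h (u, v) hv rfl
    rw [this, Finset.card_compl, card_fst_image M, Fintype.card_fin]
  have h2 : Fintype.card { v : Fin r // ∀ u, (u, v) ∉ M.1 } = r - s := by
    rw [Fintype.card_subtype]
    have : Finset.univ.filter (fun v : Fin r => ∀ u, (u, v) ∉ M.1)
        = (M.1.image Prod.snd)ᶜ := by
      ext v
      simp only [Finset.mem_filter, Finset.mem_univ, true_and, Finset.mem_compl,
        Finset.mem_image, not_exists, not_and]
      constructor
      · rintro h ⟨a, b⟩ hp hpv
        exact h a (hpv ▸ hp)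
      · intro h u hu
        exact h (u, v) hu rfl
    rw [this, Finset.card_compl, card_snd_image M, Fintype.card_fin]
  have h3 : Fintype.card { p : Fin q × Fin r // p ∈ M.1 } = s := by
    rw [Fintype.card_coe, M.2.1]
  show Fintype.card (_ ⊕ _ ⊕ _) = _
  rw [Fintype.card_sum, Fintype.card_sum, h1, h2, h3]
  omega

def gMatch (q r s : ℕ) :
    (Σ A : {A : Finset (Fin q) // A.card = s}, ({x // x ∈ A.1} ↪ Fin r)) →
      SzegoMatching q r s := fun ⟨A, f⟩ =>
  ⟨A.1.attach.image (fun x => (x.1, f x)), by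
    rw [Finset.card_image_of_injective _ (fun x y h => f.injective (congrArg Prod.snd h)),
      Finset.card_attach, A.2], by
    rintro p hp p' hp' h
    simp only [Finset.mem_image, Finset.mem_attach, true_and] at hp hp'
    obtain ⟨x, rfl⟩ := hp
    obtain ⟨y, rfl⟩ := hp'
    rcases h with h | h
    · rw [Subtype.ext h]
    · rw [f.injective h]⟩

lemma gMatch_bij (q r s : ℕ) : Function.Bijective (gMatch q r s) := by
  constructor
  · rintro ⟨⟨A, hA⟩, f⟩ ⟨⟨B, hB⟩, g'⟩ h
    have hM : A.attach.image (fun x => (x.1, f x)) = B.attach.image (fun x => (x.1, g' x)) :=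
      congrArg Subtype.val h
    have hAB : A = B := by
      ext a
      constructor
      · intro ha
        have hmem : ((a : Fin q), f ⟨a, ha⟩) ∈ B.attach.image (fun x => (x.1, g' x)) := by
          rw [← hM]; exact Finset.mem_image_of_mem _ (Finset.mem_attach _ ⟨a, ha⟩)
        simp only [Finset.mem_image, Finset.mem_attach, true_and] at hmem
        obtain ⟨y, hy⟩ := hmem
        have hya : (y : Fin q) = a := congrArg Prod.fst hy
        rw [← hya]; exact y.2
      · intro hb
        have hmem : ((a : Fin q), g' ⟨a, hb⟩) ∈ A.attach.image (fun x => (x.1, f x)) := by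
          rw [hM]; exact Finset.mem_image_of_mem _ (Finset.mem_attach _ ⟨a, hb⟩)
        simp only [Finset.mem_image, Finset.mem_attach, true_and] at hmem
        obtain ⟨y, hy⟩ := hmem
        have hya : (y : Fin q) = a := congrArg Prod.fst hy
        rw [← hya]; exact y.2
    subst hAB
    have hfg : f = g' := by
      apply Function.Embedding.ext
      intro x
      have hx : (x.1, f x) ∈ A.attach.image (fun y => (y.1, g' y)) := by
        rw [← hM]; exact Finset.mem_image_of_mem _ (Finset.mem_attach _ _)
      simp only [Finset.mem_image, Finset.mem_attach, true_and] at hx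
      obtain ⟨y, hy⟩ := hx
      have h1 : y = x := Subtype.ext (congrArg Prod.fst hy)
      subst h1
      have := congrArg Prod.snd hy
      simpa using this.symm
    rw [hfg]
  · rintro ⟨F, hcard, hprop⟩
    set A : Finset (Fin q) := F.image Prod.fst with hAdef
    have hA : A.card = s := card_fst_image ⟨F, hcard, hprop⟩
    have hex : ∀ x : {x // x ∈ A}, ∃! p, p ∈ F ∧ p.1 = x.1 := by
      rintro ⟨u, hu⟩
      simp only [hAdef, Finset.mem_image] at hu
      obtain ⟨p, hp, hpu⟩ := hu
      exact ⟨p, ⟨hp, hpu⟩, fun p' ⟨hp', hpu'⟩ => hprop p' hp' p hp (Or.inl (by rw [hpu', hpu]))⟩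
    have hmem : ∀ x : {x // x ∈ A}, Finset.choose _ F (hex x) ∈ F := fun x => Finset.choose_mem _ _ _
    have hfst : ∀ x : {x // x ∈ A}, (Finset.choose _ F (hex x)).1 = x.1 :=
      fun x => Finset.choose_property (fun a => a.1 = x.1) F (hex x)
    refine ⟨⟨⟨A, hA⟩, ⟨fun x => (Finset.choose _ F (hex x)).2, ?_⟩⟩, ?_⟩
    · intro x y hxy
      have := hprop _ (hmem x) _ (hmem y) (Or.inr hxy)
      exact Subtype.ext (by rw [← hfst x, ← hfst y, this])
    · apply Subtype.ext
      show A.attach.image _ = F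
      ext p
      simp only [Finset.mem_image, Finset.mem_attach, true_and]
      constructor
      · rintro ⟨x, rfl⟩
        show ((x : Fin q), (Finset.choose _ F (hex x)).2) ∈ F
        have hc : ((x : Fin q), (Finset.choose _ F (hex x)).2) = Finset.choose _ F (hex x) :=
          Prod.ext (hfst x).symm rfl
        rw [hc]
        exact hmem x
      · intro hp
        have hu : p.1 ∈ A := by
          rw [hAdef]; exact Finset.mem_image_of_mem _ hp
        refine ⟨⟨p.1, hu⟩, ?_⟩
        have hc : Finset.choose _ F (hex ⟨p.1, hu⟩) = p :=
          (hex ⟨p.1, hu⟩).unique ⟨hmem _, hfst _⟩ ⟨hp, rfl⟩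
        show (p.1, (Finset.choose _ F (hex ⟨p.1, hu⟩)).2) = p
        have hsnd : (Finset.choose _ F (hex ⟨p.1, hu⟩)).2 = p.2 := congrArg Prod.snd hc
        exact Prod.ext rfl hsnd


lemma S_eq (k : ℕ) : ∀ q n, q ≤ k → q ≤ n → S k q n = ((n-q).choose (k-q) : ℚ) := by
  intro q
  induction q with
  | zero => intro n _ _; simp [S]
  | succ q ih =>
    intro n hk hn
    rw [S_succ, ih n (by omega) (by omega), ih (n-1) (by omega) (by omega)]
    have h1 : n - q = (n - (q+1)) + 1 := by omega
    have h2 : k - q = (k - (q+1)) + 1 := by omega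
    have h3 : n - 1 - q = n - (q+1) := by omega
    rw [h1, h2, h3, Nat.choose_succ_succ]
    push_cast
    ring

lemma S_zero (k n : ℕ) (h : k + 1 ≤ n) : S k (k+1) n = 0 := by
  rw [S_succ, S_eq k k n le_rfl (by omega), S_eq k k (n-1) le_rfl (by omega)]
  simp

lemma card_matching (q r s : ℕ) :
    Nat.card (SzegoMatching q r s) = q.choose s * (r.descFactorial s) := by
  rw [← Nat.card_eq_of_bijective (gMatch q r s) (gMatch_bij q r s), Nat.card_eq_fintype_card,
    Fintype.card_sigma]
  have h : ∀ A : {A : Finset (Fin q) // A.card = s},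
      Fintype.card ({x // x ∈ A.1} ↪ Fin r) = r.descFactorial s := by
    intro A
    rw [Fintype.card_embedding_eq, Fintype.card_fin, Fintype.card_coe, A.2]
  rw [Finset.sum_congr rfl (fun A _ => h A), Finset.sum_const, Finset.card_univ,
    Fintype.card_finset_len, Fintype.card_fin, smul_eq_mul]

lemma card_config (q r s : ℕ) (hq : s ≤ q) (hr : s ≤ r) :
    Nat.card (SzegoConfig q r s) = q.choose s * r.descFactorial s * (q+r-s).factorial := by
  have h0 : Nat.card (SzegoConfig q r s)
      = Fintype.card (Σ M : SzegoMatching q r s, Fin (q+r-s) ≃ SzegoBlocks M) :=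
    Nat.card_eq_fintype_card
  rw [h0, Fintype.card_sigma]
  have h : ∀ M : SzegoMatching q r s,
      Fintype.card (Fin (q+r-s) ≃ SzegoBlocks M) = (q+r-s).factorial := by
    intro M
    have hc : Fintype.card (Fin (q+r-s)) = Fintype.card (SzegoBlocks M) := by
      rw [Fintype.card_fin, card_blocks hq hr M]
    rw [Fintype.card_equiv (Fintype.equivOfCardEq hc), Fintype.card_fin]
  rw [Finset.sum_congr rfl (fun M _ => h M), Finset.sum_const, Finset.card_univ,
    smul_eq_mul, ← Nat.card_eq_fintype_card, card_matching q r s]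

theorem szego_config_count_and_vanish (q r : ℕ) (hq : 1 ≤ q) (hr : 1 ≤ r) :
    (∀ s ≤ min q r, Nat.card (SzegoConfig q r s) =
        q.choose s * r.choose s * s.factorial * (q + r - s).factorial)
    ∧ ∑ s ∈ Finset.range (min q r + 1),
        (-1 : ℚ) ^ (q + r - s) / ((q + r - s : ℕ) : ℚ) *
          (Nat.card (SzegoConfig q r s) : ℚ) = 0 := by
  have hcount : ∀ s ≤ min q r, Nat.card (SzegoConfig q r s) =
      q.choose s * r.choose s * s.factorial * (q + r - s).factorial := by
    intro s hs
    rw [card_config q r s (le_trans hs (min_le_left _ _)) (le_trans hs (min_le_right _ _)),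
      Nat.descFactorial_eq_factorial_mul_choose]
    ring
  refine ⟨hcount, ?_⟩
  have hterm : ∀ s ∈ Finset.range (min q r + 1),
      (-1 : ℚ) ^ (q + r - s) / ((q + r - s : ℕ) : ℚ) * (Nat.card (SzegoConfig q r s) : ℚ)
      = ((-1:ℚ)^(q+r) * (((q-1).factorial * r.factorial : ℕ) : ℚ)) *
          ((-1:ℚ)^s * (q.choose s) * ((q+r-1-s).choose (q-1))) := by
    intro s hs
    rw [Finset.mem_range] at hs
    have hs' : s ≤ min q r := by omega
    have hne : ((q+r-s : ℕ):ℚ) ≠ 0 := by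
      have h0 : 0 < q + r - s := by omega
      exact_mod_cast h0.ne'
    have hnat : q.choose s * r.choose s * s.factorial * (q+r-s).factorial
        = (q+r-s) * ((q-1).factorial * r.factorial * (q.choose s * (q+r-1-s).choose (q-1))) := by
      have h1 : (q+r-s).factorial = (q+r-s) * (q+r-1-s).factorial := by
        rw [show q+r-s = (q+r-1-s)+1 by omega, Nat.factorial_succ]
      have h2 : (q+r-1-s).choose (q-1) * (q-1).factorial * (r-s).factorial
          = (q+r-1-s).factorial := by
        have h := Nat.choose_mul_factorial_mul_factorial (show q-1 ≤ q+r-1-s by omega)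
        rwa [show q+r-1-s-(q-1) = r - s by omega] at h
      have h3 : r.choose s * s.factorial * (r-s).factorial = r.factorial :=
        Nat.choose_mul_factorial_mul_factorial (by omega)
      rw [h1, ← h2, ← h3]
      ring
    have h5 : ((-1:ℚ))^(q+r-s) = (-1:ℚ)^(q+r) * (-1:ℚ)^s := by
      have hss : ((-1:ℚ))^s * (-1:ℚ)^s = 1 := by
        rw [← pow_add, ← two_mul, pow_mul]; norm_num
      calc ((-1:ℚ))^(q+r-s) = (-1:ℚ)^(q+r-s) * ((-1:ℚ)^s * (-1:ℚ)^s) := by rw [hss, mul_one]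
        _ = ((-1:ℚ)^(q+r-s) * (-1:ℚ)^s) * (-1:ℚ)^s := by ring
        _ = (-1:ℚ)^(q+r) * (-1:ℚ)^s := by
            rw [← pow_add, show q+r-s+s = q+r by omega]
    rw [hcount s hs', h5, hnat]
    push_cast
    field_simp
  rw [Finset.sum_congr rfl hterm, ← Finset.mul_sum]
  have hext : ∑ s ∈ Finset.range (min q r + 1),
        ((-1:ℚ)^s * (q.choose s) * ((q+r-1-s).choose (q-1)))
      = ∑ s ∈ Finset.range (q + 1),
        ((-1:ℚ)^s * (q.choose s) * ((q+r-1-s).choose (q-1))) := by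
    apply Finset.sum_subset
    · apply Finset.range_subset_range.mpr; omega
    · intro x hx hnx
      rw [Finset.mem_range] at hx
      rw [Finset.mem_range, not_lt] at hnx
      have hlt : q+r-1-x < q-1 := by omega
      rw [Nat.choose_eq_zero_of_lt hlt]
      simp
  rw [hext]
  have hS0 : ∑ s ∈ Finset.range (q + 1),
      ((-1:ℚ)^s * (q.choose s) * ((q+r-1-s).choose (q-1))) = 0 := by
    have h := S_zero (q-1) (q+r-1) (by omega)
    rw [show (q-1)+1 = q by omega] at h
    exact h
  rw [hS0, mul_zero]
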